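/- Let θ be the logarithmic mean with partial derivatives θ₁, θ₂. For all s, t > 0: θ₁(s,t) + θ₂(s,t) ≥ θ(1,s) + θ(1,t) − θ(s,t). -/

import Mathlib

open Real intervalIntegral MeasureTheory

/-- The logarithmic mean, extended by `θ(s,s) = s` and `θ(s,0) = θ(0,t) = 0`. -/
noncomputable def logMean (s t : ℝ) : ℝ :=
  if s = t then s else if s = 0 ∨ t = 0 then 0 else (s - t) / (Real.log s - Real.log t)

/-- Partial derivative of the logarithmic mean in the first variable. -/
noncomputable def logMean₁ (s t : ℝ) : ℝ := deriv (fun x => logMean x t) s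

/-- Partial derivative of the logarithmic mean in the second variable. -/
noncomputable def logMean₂ (s t : ℝ) : ℝ := deriv (fun y => logMean s y) t

lemma logMean_symm (s t : ℝ) : logMean s t = logMean t s := by
  unfold logMean
  rcases eq_or_ne s t with h | h
  · simp [h]
  · rw [if_neg h, if_neg (Ne.symm h)]
    rcases em (s = 0 ∨ t = 0) with h0 | h0
    · rw [if_pos h0, if_pos (Or.symm h0)]
    · rw [if_neg h0, if_neg (fun c => h0 (Or.symm c))]
      rw [← neg_div_neg_eq]; ring_nf

lemma logMean_rep {s t : ℝ} (hs : 0 < s) (ht : 0 < t) :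
    logMean s t = ∫ u in (0:ℝ)..1, s ^ u * t ^ (1 - u) := by
  rcases eq_or_ne s t with h | h
  · subst h
    have : ∀ u : ℝ, s ^ u * s ^ (1 - u) = s := by
      intro u
      rw [← Real.rpow_add hs]; norm_num
    simp only [this]
    rw [intervalIntegral.integral_const]
    simp [logMean]
  · have key : ∀ u : ℝ, s ^ u * t ^ (1 - u) = t * Real.exp ((Real.log s - Real.log t) * u) := by
      intro u
      nth_rewrite 2 [← Real.exp_log ht]
      rw [Real.rpow_def_of_pos hs, Real.rpow_def_of_pos ht, ← Real.exp_add, ← Real.exp_add]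
      congr 1
      ring
    simp only [key]
    set L := Real.log s - Real.log t with hL
    have hLne : L ≠ 0 := by
      have := Real.log_injOn_pos.ne (Set.mem_Ioi.mpr hs) (Set.mem_Ioi.mpr ht) h
      simpa [hL, sub_ne_zero] using this
    have : (∫ u in (0:ℝ)..1, t * Real.exp (L * u)) = t * ((Real.exp L - 1) / L) := by
      rw [intervalIntegral.integral_const_mul]
      congr 1
      have : ∀ u ∈ Set.uIcc (0:ℝ) 1, HasDerivAt (fun v => Real.exp (L * v) / L)
          (Real.exp (L * u)) u := by
        intro u _
        have h1 : HasDerivAt (fun v : ℝ => L * v) L u := by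
          simpa using (hasDerivAt_id u).const_mul L
        have := (Real.hasDerivAt_exp (L * u)).comp u h1
        have h2 := this.div_const L
        simpa [mul_comm, mul_div_assoc, mul_div_cancel_left₀ _ hLne] using h2
      rw [intervalIntegral.integral_eq_sub_of_hasDerivAt this]
      · rw [mul_zero, Real.exp_zero]; ring
      · apply Continuous.intervalIntegrable
        continuity
    rw [this]
    unfold logMean
    rw [if_neg h, if_neg (by push_neg; exact ⟨ne_of_gt hs, ne_of_gt ht⟩)]
    rw [Real.exp_sub, Real.exp_log hs, Real.exp_log ht]
    rw [← hL]
    field_simp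

lemma holder_pt {a b c d x : ℝ} (ha : 0 < a) (hb : 0 < b) (hc : 0 < c) (hd : 0 < d)
    (hx0 : 0 ≤ x) (hx1 : x ≤ 1) :
    a ^ x * b ^ (1 - x) + c ^ x * d ^ (1 - x) ≤ (a + c) ^ x * (b + d) ^ (1 - x) := by
  have hac : 0 < a + c := by linarith
  have hbd : 0 < b + d := by linarith
  have h1 : a ^ x * b ^ (1 - x) =
      (a + c) ^ x * (b + d) ^ (1 - x) * ((a / (a + c)) ^ x * (b / (b + d)) ^ (1 - x)) := by
    rw [Real.div_rpow (le_of_lt ha) (le_of_lt hac), Real.div_rpow (le_of_lt hb) (le_of_lt hbd)]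
    field_simp
  have h2 : c ^ x * d ^ (1 - x) =
      (a + c) ^ x * (b + d) ^ (1 - x) * ((c / (a + c)) ^ x * (d / (b + d)) ^ (1 - x)) := by
    rw [Real.div_rpow (le_of_lt hc) (le_of_lt hac), Real.div_rpow (le_of_lt hd) (le_of_lt hbd)]
    field_simp
  have g1 : (a / (a + c)) ^ x * (b / (b + d)) ^ (1 - x) ≤ x * (a / (a + c)) + (1 - x) * (b / (b + d)) :=
    Real.geom_mean_le_arith_mean2_weighted hx0 (by linarith) (by positivity) (by positivity) (by ring)
  have g2 : (c / (a + c)) ^ x * (d / (b + d)) ^ (1 - x) ≤ x * (c / (a + c)) + (1 - x) * (d / (b + d)) :=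
    Real.geom_mean_le_arith_mean2_weighted hx0 (by linarith) (by positivity) (by positivity) (by ring)
  rw [h1, h2, ← mul_add]
  have hP : (0:ℝ) < (a + c) ^ x * (b + d) ^ (1 - x) := by positivity
  have hsum : (a / (a + c)) ^ x * (b / (b + d)) ^ (1 - x)
      + ((c / (a + c)) ^ x * (d / (b + d)) ^ (1 - x)) ≤ 1 := by
    have : x * (a / (a + c)) + (1 - x) * (b / (b + d))
        + (x * (c / (a + c)) + (1 - x) * (d / (b + d))) = 1 := by
      field_simp
      ring
    linarith
  calc (a + c) ^ x * (b + d) ^ (1 - x) * ((a / (a + c)) ^ x * (b / (b + d)) ^ (1 - x)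
        + (c / (a + c)) ^ x * (d / (b + d)) ^ (1 - x))
      ≤ (a + c) ^ x * (b + d) ^ (1 - x) * 1 := by
        exact mul_le_mul_of_nonneg_left hsum (le_of_lt hP)
    _ = (a + c) ^ x * (b + d) ^ (1 - x) := by ring

lemma cont_pow {a b : ℝ} (ha : 0 < a) (hb : 0 < b) :
    Continuous fun u : ℝ => a ^ u * b ^ (1 - u) := by
  have : (fun u : ℝ => a ^ u * b ^ (1 - u)) =
      fun u => Real.exp (Real.log a * u) * Real.exp (Real.log b * (1 - u)) := by
    funext u
    rw [Real.rpow_def_of_pos ha, Real.rpow_def_of_pos hb]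
  rw [this]
  continuity

lemma logMean_superadd {a b c d : ℝ} (ha : 0 < a) (hb : 0 < b) (hc : 0 < c) (hd : 0 < d) :
    logMean a b + logMean c d ≤ logMean (a + c) (b + d) := by
  have i1 : IntervalIntegrable (fun u : ℝ => a ^ u * b ^ (1 - u)) volume 0 1 :=
    (cont_pow ha hb).intervalIntegrable 0 1
  have i2 : IntervalIntegrable (fun u : ℝ => c ^ u * d ^ (1 - u)) volume 0 1 :=
    (cont_pow hc hd).intervalIntegrable 0 1
  have i3 : IntervalIntegrable (fun u : ℝ => (a + c) ^ u * (b + d) ^ (1 - u)) volume 0 1 :=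
    (cont_pow (add_pos ha hc) (add_pos hb hd)).intervalIntegrable 0 1
  rw [logMean_rep ha hb, logMean_rep hc hd, logMean_rep (add_pos ha hc) (add_pos hb hd),
    ← intervalIntegral.integral_add i1 i2]
  apply intervalIntegral.integral_mono_on (by norm_num) (i1.add i2) i3
  intro x hx
  exact holder_pt ha hb hc hd hx.1 hx.2

lemma cont_pow' {s t : ℝ} (hs : 0 < s) (ht : 0 < t) :
    Continuous fun u : ℝ => u * s ^ (u - 1) * t ^ (1 - u) := by
  have : (fun u : ℝ => u * s ^ (u - 1) * t ^ (1 - u)) =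
      fun u => u * Real.exp (Real.log s * (u - 1)) * Real.exp (Real.log t * (1 - u)) := by
    funext u
    rw [Real.rpow_def_of_pos hs, Real.rpow_def_of_pos ht]
  rw [this]
  continuity

lemma hasDerivAt_logMean {s t : ℝ} (hs : 0 < s) (ht : 0 < t) :
    HasDerivAt (fun x => logMean x t) (∫ u in (0:ℝ)..1, u * s ^ (u - 1) * t ^ (1 - u)) s := by
  set C : ℝ := max ((s/2) ^ (-1:ℝ)) 1 * max 1 t with hC
  have hεpos : (0:ℝ) < s / 2 := by linarith
  have hball : ∀ x ∈ Metric.ball s (s/2), s / 2 < x ∧ x < 3 * s / 2 := by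
    intro x hx
    rw [Metric.mem_ball, Real.dist_eq, abs_lt] at hx
    constructor <;> linarith [hx.1, hx.2]
  have key : HasDerivAt (fun x => ∫ u in (0:ℝ)..1, x ^ u * t ^ (1 - u))
      (∫ u in (0:ℝ)..1, u * s ^ (u - 1) * t ^ (1 - u)) s := by
    apply (intervalIntegral.hasDerivAt_integral_of_dominated_loc_of_deriv_le
      (F := fun x u => x ^ u * t ^ (1 - u)) (F' := fun x u => u * x ^ (u - 1) * t ^ (1 - u))
      (bound := fun _ => C) (Metric.ball_mem_nhds s hεpos) ?_ ?_ ?_ ?_ ?_ ?_).2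
    · filter_upwards [eventually_gt_nhds hs] with x hx
      exact (cont_pow hx ht).aestronglyMeasurable
    · exact (cont_pow hs ht).intervalIntegrable 0 1
    · exact (cont_pow' hs ht).aestronglyMeasurable
    · apply Filter.Eventually.of_forall
      intro u hu x hx
      obtain ⟨hx1, hx2⟩ := hball x hx
      have hxpos : 0 < x := lt_trans hεpos hx1
      rw [Set.uIoc_of_le (by norm_num : (0:ℝ) ≤ 1)] at hu
      have hu0 : 0 < u := hu.1
      have hu1 : u ≤ 1 := hu.2
      simp only [Real.norm_eq_abs]
      rw [abs_of_nonneg (by positivity)]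
      have h1 : x ^ (u - 1) ≤ max ((s/2) ^ (-1:ℝ)) 1 := by
        have hxs : x ^ (u - 1) ≤ (s/2) ^ (u - 1) :=
          Real.rpow_le_rpow_of_nonpos hεpos (le_of_lt hx1) (by linarith)
        rcases le_or_gt (s/2) 1 with h | h
        · exact le_trans hxs (le_trans
            (Real.rpow_le_rpow_of_exponent_ge hεpos h (by linarith)) (le_max_left _ _))
        · refine le_trans hxs (le_trans ?_ (le_max_right _ _))
          calc (s/2) ^ (u - 1) ≤ (s/2) ^ (0:ℝ) :=
                Real.rpow_le_rpow_of_exponent_le (le_of_lt h) (by linarith)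
            _ = 1 := Real.rpow_zero _
      have h2 : t ^ (1 - u) ≤ max 1 t := by
        rcases le_or_gt t 1 with h | h
        · refine le_trans ?_ (le_max_left _ _)
          calc t ^ (1 - u) ≤ t ^ (0:ℝ) :=
                Real.rpow_le_rpow_of_exponent_ge ht h (by linarith)
            _ = 1 := Real.rpow_zero _
        · refine le_trans ?_ (le_max_right _ _)
          calc t ^ (1 - u) ≤ t ^ (1:ℝ) :=
                Real.rpow_le_rpow_of_exponent_le (le_of_lt h) (by linarith)
            _ = t := Real.rpow_one _
      calc u * x ^ (u - 1) * t ^ (1 - u) ≤ 1 * (max ((s/2) ^ (-1:ℝ)) 1) * max 1 t := by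
            apply mul_le_mul (mul_le_mul hu1 h1 (by positivity) (by norm_num)) h2
              (by positivity) (by positivity)
        _ = C := by rw [hC]; ring
    · exact intervalIntegrable_const
    · apply Filter.Eventually.of_forall
      intro u hu x hx
      have hxpos : 0 < x := lt_trans hεpos (hball x hx).1
      exact (Real.hasDerivAt_rpow_const (Or.inl (ne_of_gt hxpos))).mul_const _
  apply key.congr_of_eventuallyEq
  filter_upwards [eventually_gt_nhds hs] with x hx
  exact logMean_rep hx ht

lemma logMean₁_eq {s t : ℝ} (hs : 0 < s) (ht : 0 < t) :
    logMean₁ s t = ∫ u in (0:ℝ)..1, u * s ^ (u - 1) * t ^ (1 - u) :=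
  (hasDerivAt_logMean hs ht).deriv

lemma logMean₂_eq {s t : ℝ} (hs : 0 < s) (ht : 0 < t) :
    logMean₂ s t = ∫ u in (0:ℝ)..1, u * t ^ (u - 1) * s ^ (1 - u) := by
  have : (fun y => logMean s y) = fun y => logMean y s := by
    funext y
    exact logMean_symm s y
  rw [logMean₂, this]
  exact (hasDerivAt_logMean ht hs).deriv

lemma J_diag {t : ℝ} (ht : 0 < t) :
    (∫ u in (0:ℝ)..1, u * t ^ (u - 1) * t ^ (1 - u)) = 1 / 2 := by
  have key : ∀ u : ℝ, u * t ^ (u - 1) * t ^ (1 - u) = u := by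
    intro u
    rw [mul_assoc, ← Real.rpow_add ht]
    norm_num
  simp only [key]
  rw [integral_id]
  norm_num

lemma J_off {s t : ℝ} (hs : 0 < s) (ht : 0 < t) (hst : s ≠ t) :
    (∫ u in (0:ℝ)..1, u * s ^ (u - 1) * t ^ (1 - u))
      = (s * (Real.log s - Real.log t) - s + t) / (s * (Real.log s - Real.log t) ^ 2) := by
  set L := Real.log s - Real.log t with hL
  have hLne : L ≠ 0 := by
    have := Real.log_injOn_pos.ne (Set.mem_Ioi.mpr hs) (Set.mem_Ioi.mpr ht) hst
    simpa [hL, sub_ne_zero] using this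
  have key : ∀ u : ℝ, u * s ^ (u - 1) * t ^ (1 - u) = t / s * (u * Real.exp (L * u)) := by
    intro u
    rw [Real.rpow_def_of_pos hs, Real.rpow_def_of_pos ht]
    have h1 : Real.exp (Real.log s * (u - 1)) * Real.exp (Real.log t * (1 - u))
        = Real.exp (-L) * Real.exp (L * u) := by
      rw [← Real.exp_add, ← Real.exp_add]
      congr 1
      rw [hL]; ring
    have h2 : Real.exp (-L) = t / s := by
      rw [hL, neg_sub, Real.exp_sub, Real.exp_log ht, Real.exp_log hs]
    rw [mul_assoc, h1, h2]
    ring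
  simp only [key]
  rw [intervalIntegral.integral_const_mul]
  have hG : ∀ u ∈ Set.uIcc (0:ℝ) 1, HasDerivAt (fun v => (v / L - 1 / L ^ 2) * Real.exp (L * v))
      (u * Real.exp (L * u)) u := by
    intro u _
    have h1 : HasDerivAt (fun v : ℝ => v / L - 1 / L ^ 2) (1 / L) u :=
      ((hasDerivAt_id u).div_const L).sub_const _
    have hlin : HasDerivAt (fun v : ℝ => L * v) L u := by
      simpa using (hasDerivAt_id u).const_mul L
    have h2 : HasDerivAt (fun v : ℝ => Real.exp (L * v)) (Real.exp (L * u) * L) u :=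
      (Real.hasDerivAt_exp (L * u)).comp u hlin
    have h3 := h1.fun_mul h2
    refine h3.congr_deriv ?_
    field_simp
    ring
  have hint : IntervalIntegrable (fun u : ℝ => u * Real.exp (L * u)) volume 0 1 :=
    (by continuity : Continuous fun u : ℝ => u * Real.exp (L * u)).intervalIntegrable 0 1
  rw [intervalIntegral.integral_eq_sub_of_hasDerivAt hG hint]
  have hexpL : Real.exp L = s / t := by
    rw [hL, Real.exp_sub, Real.exp_log hs, Real.exp_log ht]
  rw [mul_one, mul_zero, Real.exp_zero, hexpL]
  field_simp
  ring

lemma deriv_sum_eq_diag {t : ℝ} (ht : 0 < t) : logMean₁ t t + logMean₂ t t = 1 := by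
  rw [logMean₁_eq ht ht, logMean₂_eq ht ht, J_diag ht]
  norm_num

lemma deriv_sum_eq_off {s t : ℝ} (hs : 0 < s) (ht : 0 < t) (hst : s ≠ t) :
    logMean₁ s t + logMean₂ s t = (s - t) ^ 2 / (s * t * (Real.log s - Real.log t) ^ 2) := by
  rw [logMean₁_eq hs ht, logMean₂_eq hs ht, J_off hs ht hst, J_off ht hs (Ne.symm hst)]
  have hLne : Real.log s - Real.log t ≠ 0 := by
    have := Real.log_injOn_pos.ne (Set.mem_Ioi.mpr hs) (Set.mem_Ioi.mpr ht) hst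
    simpa [sub_ne_zero] using this
  set L := Real.log s - Real.log t with hL
  have h2 : Real.log t - Real.log s = -L := by rw [hL]; ring
  rw [h2]
  field_simp
  ring

lemma logMean_of_ne {a b : ℝ} (ha : a ≠ 0) (hb : b ≠ 0) (hab : a ≠ b) :
    logMean a b = (a - b) / (Real.log a - Real.log b) := by
  unfold logMean
  rw [if_neg hab, if_neg (by push_neg; exact ⟨ha, hb⟩)]

lemma logMean_self (a : ℝ) : logMean a a = a := by
  unfold logMean
  rw [if_pos rfl]

lemma core {s t : ℝ} (ht : 0 < t) (hts : t < s) :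
    logMean 1 s + logMean 1 t - logMean s t ≤
      (s - t) ^ 2 / (s * t * (Real.log s - Real.log t) ^ 2) := by
  have hs : 0 < s := lt_trans ht hts
  set L := Real.log s - Real.log t with hLdef
  set M := Real.log (1 + s) - Real.log (1 + t) with hMdef
  set D := s - t with hDdef
  have hD : 0 < D := by rw [hDdef]; linarith
  have hL : 0 < L := by rw [hLdef]; have := Real.log_lt_log ht hts; linarith
  have hM : 0 < M := by
    rw [hMdef]
    have := Real.log_lt_log (by linarith : (0:ℝ) < 1 + t) (by linarith : 1 + t < 1 + s)
    linarith
  have hLM : M < L := by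
    have h1 : Real.log s + Real.log (1 + t) = Real.log (s * (1 + t)) :=
      (Real.log_mul (ne_of_gt hs) (by positivity)).symm
    have h2 : Real.log t + Real.log (1 + s) = Real.log (t * (1 + s)) :=
      (Real.log_mul (ne_of_gt ht) (by positivity)).symm
    have h3 : t * (1 + s) < s * (1 + t) := by nlinarith
    have h4 := Real.log_lt_log (by positivity) h3
    rw [hMdef, hLdef]
    linarith
  -- step A
  have hA : logMean 1 s + logMean 1 t ≤ D / M := by
    have hsup := logMean_superadd (by norm_num : (0:ℝ) < 1) hs ht (by norm_num : (0:ℝ) < 1)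
    rw [logMean_symm t 1, logMean_symm (1 + t) (s + 1)] at hsup
    have hval : logMean (s + 1) (1 + t) = D / M := by
      rw [logMean_of_ne (by positivity) (by positivity) (by intro hc; rw [hDdef] at hD; linarith)]
      rw [hDdef, hMdef]
      rw [show s + 1 = 1 + s by ring]
      congr 1
      ring
    rw [hval] at hsup
    exact hsup
  -- step B
  have hinv : logMean (1 / s) (1 / t) = D / (s * t * L) := by
    rw [logMean_of_ne (by positivity) (by positivity)
      (by
        intro hc
        rw [div_eq_div_iff (ne_of_gt hs) (ne_of_gt ht)] at hc
        simp only [one_mul] at hc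
        linarith)]
    rw [one_div, one_div, Real.log_inv, Real.log_inv]
    rw [show -Real.log s - -Real.log t = -L by rw [hLdef]; ring]
    rw [div_eq_div_iff (neg_ne_zero.mpr (ne_of_gt hL)) (by positivity)]
    rw [hDdef]
    field_simp
    ring
  have hBval : logMean (1 + 1 / s) (1 + 1 / t) = D / (s * t * (L - M)) := by
    have hne : 1 + 1 / s ≠ 1 + 1 / t := by
      intro hc
      have h1 : 1 / s = 1 / t := by linarith
      rw [div_eq_div_iff (ne_of_gt hs) (ne_of_gt ht)] at h1
      simp only [one_mul] at h1
      linarith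
    rw [logMean_of_ne (by positivity) (by positivity) hne]
    have e1 : (1:ℝ) + 1 / s = (1 + s) / s := by field_simp; ring
    have e2 : (1:ℝ) + 1 / t = (1 + t) / t := by field_simp; ring
    have l1 : Real.log (1 + 1 / s) = Real.log (1 + s) - Real.log s := by
      rw [e1, Real.log_div (by positivity) (ne_of_gt hs)]
    have l2 : Real.log (1 + 1 / t) = Real.log (1 + t) - Real.log t := by
      rw [e2, Real.log_div (by positivity) (ne_of_gt ht)]
    rw [l1, l2]
    rw [show Real.log (1 + s) - Real.log s - (Real.log (1 + t) - Real.log t) = -(L - M) by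
      rw [hLdef, hMdef]; ring]
    rw [show (1:ℝ) + 1 / s - (1 + 1 / t) = 1 / s - 1 / t by ring]
    have hLMpos : 0 < L - M := sub_pos.mpr hLM
    rw [div_eq_div_iff (neg_ne_zero.mpr (ne_of_gt hLMpos)) (ne_of_gt (mul_pos (mul_pos hs ht) hLMpos))]
    rw [hDdef]
    field_simp
    ring
  have hB0 : 1 + D / (s * t * L) ≤ D / (s * t * (L - M)) := by
    have hsup := logMean_superadd (by norm_num : (0:ℝ) < 1) (by norm_num : (0:ℝ) < 1)
      (by positivity : (0:ℝ) < 1 / s) (by positivity : (0:ℝ) < 1 / t)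
    rw [logMean_self 1, hinv, hBval] at hsup
    exact hsup
  have key : s * t * L * (L - M) ≤ D * M := by
    have e1 : 1 + D / (s * t * L) = (s * t * L + D) / (s * t * L) := by
      field_simp
    rw [e1, div_le_div_iff₀ (by positivity) (mul_pos (mul_pos hs ht) (sub_pos.mpr hLM))] at hB0
    nlinarith [mul_pos hs ht, hB0]
  -- combine
  have hfr : 0 ≤ D / L + D ^ 2 / (s * t * L ^ 2) - D / M := by
    have e : D / L + D ^ 2 / (s * t * L ^ 2) - D / M
        = (D * M - s * t * L * (L - M)) * D / (s * t * L ^ 2 * M) := by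
      field_simp
      ring
    rw [e]
    apply div_nonneg (mul_nonneg (by linarith) hD.le) (by positivity)
  have hst : logMean s t = D / L := by
    rw [logMean_of_ne (ne_of_gt hs) (ne_of_gt ht) (by intro hc; rw [hDdef] at hD; linarith)]
  rw [hst]
  linarith

theorem logMean_deriv_sum_bound (s t : ℝ) (hs : 0 < s) (ht : 0 < t) :
    logMean₁ s t + logMean₂ s t ≥ logMean 1 s + logMean 1 t - logMean s t := by
  rcases eq_or_ne s t with h | h
  · subst h
    rw [deriv_sum_eq_diag hs, logMean_self s]
    have hsup := logMean_superadd (by norm_num : (0:ℝ) < 1) hs hs (by norm_num : (0:ℝ) < 1)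
    rw [logMean_symm s 1] at hsup
    have : logMean (1 + s) (s + 1) = 1 + s := by
      rw [show s + 1 = 1 + s by ring, logMean_self]
    rw [this] at hsup
    linarith
  · rw [deriv_sum_eq_off hs ht h, ge_iff_le]
    rcases lt_or_gt_of_ne h with hlt | hgt
    · have hcore := core hs hlt
      rw [logMean_symm t s] at hcore
      have e1 : (t - s) ^ 2 = (s - t) ^ 2 := by ring
      have e2 : t * s * (Real.log t - Real.log s) ^ 2
          = s * t * (Real.log s - Real.log t) ^ 2 := by ring
      rw [e1, e2] at hcore
      linarith
    · exact core ht hgt
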